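/- For each n ≥ 1, the set of generic n-tuples {⟨g₁,…,g_n⟩ ∈ Sym(ω)^n : ⟨g₁,…,g_n⟩ is generic} is comeagre in Sym(ω)^n with the product of the Polish topologies. -/

import Mathlib

/-- The Polish topology of pointwise convergence on `Sym(ω)`, inherited from
the Baire space `ω^ω`. -/
noncomputable instance permTop : TopologicalSpace (Equiv.Perm ℕ) :=
  TopologicalSpace.induced (fun g : Equiv.Perm ℕ => (g : ℕ → ℕ)) inferInstance

/-- A finite tuple `⟨g 0, …, g (n-1)⟩` of permutations of `ω` is *generic* if
(1) every finite `A ⊆ ω` extends to a finite `B` invariant under all `g i`, and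
(2) whenever `A` is finite and invariant under all `g i`, `A ⊆ B` finite, and
`h i ∈ Sym(B)` extends `g i ↾ A` for each `i`, then there is `π ∈ Sym(ω)`
fixing `A` pointwise with `π * g i * π⁻¹` extending `h i` for all `i`. -/
def IsGenericTuple {n : ℕ} (g : Fin n → Equiv.Perm ℕ) : Prop :=
  (∀ A : Finset ℕ, ∃ B : Finset ℕ, A ⊆ B ∧ ∀ i, B.image (g i) = B) ∧
  (∀ A B : Finset ℕ, A ⊆ B → (∀ i, A.image (g i) = A) →
    ∀ h : Fin n → Equiv.Perm ℕ,
      (∀ i, B.image (h i) = B) → (∀ i, ∀ x ∉ B, h i x = x) →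
      (∀ i, ∀ a ∈ A, h i a = g i a) →
      ∃ π : Equiv.Perm ℕ, (∀ a ∈ A, π a = a) ∧
        ∀ i, ∀ b ∈ B, (π * g i * π⁻¹) b = h i b)

open Set Filter Topology

/-- Extend a finite injective partial map to a permutation of ℕ. -/
lemma exists_perm_extend (f : ℕ → ℕ) (D : Finset ℕ) (hinj : Set.InjOn f ↑D) :
    ∃ g : Equiv.Perm ℕ, ∀ x ∈ D, g x = f x := by
  classical
  set E := D.image f with hE
  have hmem : ∀ x : (↑D : Set ℕ), f ↑x ∈ (↑E : Set ℕ) := by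
    rintro ⟨x, hx⟩
    simp only [hE, Finset.coe_image, Set.mem_image]
    exact ⟨x, hx, rfl⟩
  have hbij : Function.Bijective (fun x : (↑D : Set ℕ) => (⟨f ↑x, hmem x⟩ : (↑E : Set ℕ))) := by
    constructor
    · rintro ⟨x, hx⟩ ⟨y, hy⟩ hxy
      simp only [Subtype.mk.injEq] at hxy
      exact Subtype.ext (hinj hx hy hxy)
    · rintro ⟨y, hy⟩
      simp only [hE, Finset.coe_image, Set.mem_image] at hy
      obtain ⟨x, hx, rfl⟩ := hy
      exact ⟨⟨x, hx⟩, rfl⟩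
  let e1 := Equiv.ofBijective _ hbij
  haveI : Infinite ((↑D : Set ℕ)ᶜ : Set ℕ) := (D.finite_toSet.infinite_compl).to_subtype
  haveI : Infinite ((↑E : Set ℕ)ᶜ : Set ℕ) := (E.finite_toSet.infinite_compl).to_subtype
  obtain ⟨e2⟩ : Nonempty (((↑D : Set ℕ)ᶜ : Set ℕ) ≃ ((↑E : Set ℕ)ᶜ : Set ℕ)) :=
    nonempty_equiv_of_countable
  refine ⟨(Equiv.Set.sumCompl (↑D : Set ℕ)).symm.trans ((e1.sumCongr e2).trans
    (Equiv.Set.sumCompl (↑E : Set ℕ))), ?_⟩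
  intro x hx
  have h1 : (Equiv.Set.sumCompl (↑D : Set ℕ)).symm x = Sum.inl ⟨x, by exact_mod_cast hx⟩ :=
    Equiv.Set.sumCompl_symm_apply_of_mem (by exact_mod_cast hx)
  show (Equiv.Set.sumCompl (↑E : Set ℕ)) ((e1.sumCongr e2)
    ((Equiv.Set.sumCompl (↑D : Set ℕ)).symm x)) = f x
  rw [h1]
  simp only [Equiv.sumCongr_apply, Sum.map_inl]
  exact Equiv.Set.sumCompl_apply_inl _ _

lemma perm_nhds_basis {n : ℕ} (g₀ : Fin n → Equiv.Perm ℕ)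
    {V : Set (Fin n → Equiv.Perm ℕ)} (hV : V ∈ 𝓝 g₀) :
    ∃ F : Finset ℕ, ∀ g : Fin n → Equiv.Perm ℕ,
      (∀ i, ∀ x ∈ F, g i x = g₀ i x) → g ∈ V := by
  classical
  rw [nhds_pi, Filter.mem_pi] at hV
  obtain ⟨I, _, t, ht, hsub⟩ := hV
  have key : ∀ i : Fin n, ∃ J : Finset ℕ, ∀ p : Equiv.Perm ℕ,
      (∀ x ∈ J, p x = g₀ i x) → p ∈ t i := by
    intro i
    have hti := ht i
    rw [nhds_induced] at hti
    obtain ⟨s, hs, hpre⟩ := hti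
    rw [nhds_pi, Filter.mem_pi] at hs
    obtain ⟨J, hJfin, u, hu, husub⟩ := hs
    refine ⟨hJfin.toFinset, fun p hp => ?_⟩
    apply hpre
    apply husub
    intro x hx
    have hux := hu x
    rw [nhds_discrete] at hux
    have : g₀ i x ∈ u x := hux
    show p x ∈ u x
    rw [hp x (hJfin.mem_toFinset.mpr hx)]
    exact this
  choose J hJ using key
  refine ⟨Finset.univ.biUnion J, fun g hg => ?_⟩
  apply hsub
  intro i _
  exact hJ i (g i) fun x hx => hg i x (Finset.mem_biUnion.mpr ⟨i, Finset.mem_univ _, hx⟩)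

variable {n : ℕ}

lemma continuous_permEval (i : Fin n) (x : ℕ) :
    Continuous (fun g : Fin n → Equiv.Perm ℕ => g i x) :=
  ((continuous_apply x).comp continuous_induced_dom).comp (continuous_apply i)

lemma isOpen_eval_eq (i : Fin n) (x y : ℕ) :
    IsOpen {g : Fin n → Equiv.Perm ℕ | g i x = y} :=
  (isOpen_discrete {y}).preimage (continuous_permEval i x)

lemma isClosed_eval_eq (i : Fin n) (x y : ℕ) :
    IsClosed {g : Fin n → Equiv.Perm ℕ | g i x = y} :=
  (isClosed_discrete {y}).preimage (continuous_permEval i x)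

lemma isOpen_eval_mem (i : Fin n) (x : ℕ) (B : Finset ℕ) :
    IsOpen {g : Fin n → Equiv.Perm ℕ | g i x ∈ B} :=
  (isOpen_discrete (↑B : Set ℕ)).preimage (continuous_permEval i x)

lemma isClosed_eval_mem (i : Fin n) (x : ℕ) (B : Finset ℕ) :
    IsClosed {g : Fin n → Equiv.Perm ℕ | g i x ∈ B} :=
  (isClosed_discrete (↑B : Set ℕ)).preimage (continuous_permEval i x)

def U1 (n : ℕ) (A : Finset ℕ) : Set (Fin n → Equiv.Perm ℕ) :=
  {g | ∃ B : Finset ℕ, A ⊆ B ∧ ∀ i, ∀ b ∈ B, g i b ∈ B}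

def Hyp (n : ℕ) (A : Finset ℕ) (h : Fin n → Equiv.Perm ℕ) : Set (Fin n → Equiv.Perm ℕ) :=
  {g | ∀ i, ∀ a ∈ A, g i a ∈ A ∧ g i a = h i a}

def Conc (n : ℕ) (A B : Finset ℕ) (h : Fin n → Equiv.Perm ℕ) : Set (Fin n → Equiv.Perm ℕ) :=
  ⋃ (π : Equiv.Perm ℕ) (_ : ∀ a ∈ A, π a = a),
    {g | ∀ i, ∀ b ∈ B, g i (π⁻¹ b) = π⁻¹ (h i b)}

def SideCond (n : ℕ) (A B : Finset ℕ) (h : Fin n → Equiv.Perm ℕ) : Prop :=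
  A ⊆ B ∧ (∀ i, ∀ b ∈ B, h i b ∈ B) ∧ (∀ i, ∀ x ∉ B, h i x = x)

def U2 (n : ℕ) (A B : Finset ℕ) (h : Fin n → Equiv.Perm ℕ) : Set (Fin n → Equiv.Perm ℕ) :=
  {g | SideCond n A B h ∧ g ∈ Hyp n A h → g ∈ Conc n A B h}

lemma isOpen_U1 (A : Finset ℕ) : IsOpen (U1 n A) := by
  have : U1 n A = ⋃ (B : Finset ℕ) (_ : A ⊆ B),
      ⋂ (i : Fin n) (b : ↥B), {g : Fin n → Equiv.Perm ℕ | g i ↑b ∈ B} := by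
    ext g
    simp [U1, Set.mem_iUnion, Set.mem_iInter, Subtype.forall]
  rw [this]
  refine isOpen_iUnion fun B => isOpen_iUnion fun _ => ?_
  exact isOpen_iInter_of_finite fun i => isOpen_iInter_of_finite fun b =>
    isOpen_eval_mem i ↑b B

lemma isClosed_Hyp (A : Finset ℕ) (h : Fin n → Equiv.Perm ℕ) : IsClosed (Hyp n A h) := by
  have : Hyp n A h = ⋂ (i : Fin n) (a : ℕ) (_ : a ∈ A),
      ({g : Fin n → Equiv.Perm ℕ | g i a ∈ A} ∩ {g | g i a = h i a}) := by
    ext g; simp [Hyp, Set.mem_iInter]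
  rw [this]
  exact isClosed_iInter fun i => isClosed_iInter fun a => isClosed_iInter fun _ =>
    (isClosed_eval_mem i a A).inter (isClosed_eval_eq i a (h i a))

lemma isOpen_Con (A B : Finset ℕ) (h : Fin n → Equiv.Perm ℕ) : IsOpen (Conc n A B h) := by
  refine isOpen_iUnion fun π => isOpen_iUnion fun _ => ?_
  have : {g : Fin n → Equiv.Perm ℕ | ∀ i, ∀ b ∈ B, g i (π⁻¹ b) = π⁻¹ (h i b)} =
      ⋂ (i : Fin n) (b : ↥B), {g : Fin n → Equiv.Perm ℕ | g i (π⁻¹ ↑b) = π⁻¹ (h i ↑b)} := by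
    ext g; simp [Set.mem_iInter, Subtype.forall]
  rw [this]
  exact isOpen_iInter_of_finite fun i => isOpen_iInter_of_finite fun b =>
    isOpen_eval_eq i _ _

lemma isOpen_U2 (A B : Finset ℕ) (h : Fin n → Equiv.Perm ℕ) : IsOpen (U2 n A B h) := by
  by_cases hsc : SideCond n A B h
  · have : U2 n A B h = (Hyp n A h)ᶜ ∪ Conc n A B h := by
      ext g; simp [U2, hsc, imp_iff_not_or, Set.mem_compl_iff]
    rw [this]
    exact (isClosed_Hyp A h).isOpen_compl.union (isOpen_Con A B h)
  · have : U2 n A B h = Set.univ := by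
      ext g; simp [U2, hsc]
    rw [this]; exact isOpen_univ

variable {n : ℕ}

lemma dense_U1 (A : Finset ℕ) : Dense (U1 n A) := by
  classical
  intro g₀
  rw [mem_closure_iff_nhds]
  intro V hV
  obtain ⟨F, hF⟩ := perm_nhds_basis g₀ hV
  -- B := A ∪ F ∪ images of F
  set B : Finset ℕ := A ∪ F ∪ Finset.univ.biUnion (fun i => F.image (g₀ i)) with hB
  have hFB : F ⊆ B := by intro x hx; simp [hB]; tauto
  have hAB : A ⊆ B := by intro x hx; simp [hB]; tauto
  have himB : ∀ i : Fin n, F.image (g₀ i) ⊆ B := by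
    intro i x hx
    simp only [hB, Finset.mem_union, Finset.mem_biUnion]
    exact Or.inr ⟨i, Finset.mem_univ _, hx⟩
  -- for each i, an equiv between B \ F and B \ F.image (g₀ i)
  have hcard : ∀ i : Fin n, (B \ F).card = (B \ F.image (g₀ i)).card := by
    intro i
    rw [Finset.card_sdiff_of_subset hFB, Finset.card_sdiff_of_subset (himB i),
      Finset.card_image_of_injective _ (g₀ i).injective]
  have he : ∀ i : Fin n, Nonempty (↥(B \ F) ≃ ↥(B \ F.image (g₀ i))) := by
    intro i
    exact ⟨Fintype.equivOfCardEq (by simp [Fintype.card_coe, hcard i])⟩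
  set e : ∀ i : Fin n, ↥(B \ F) ≃ ↥(B \ F.image (g₀ i)) := fun i => (he i).some with he'
  set f : Fin n → ℕ → ℕ := fun i x =>
    if x ∈ F then g₀ i x else if hx2 : x ∈ B \ F then ↑(e i ⟨x, hx2⟩) else x with hf
  have hfF : ∀ i, ∀ x ∈ F, f i x = g₀ i x := by
    intro i x hx; simp [hf, hx]
  have hfBF : ∀ i, ∀ x, (hx : x ∈ B \ F) → f i x = ↑(e i ⟨x, hx⟩) := by
    intro i x hx
    have hxF : x ∉ F := (Finset.mem_sdiff.mp hx).2
    rw [hf]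
    simp only []
    rw [if_neg hxF, dif_pos hx]
  have hinj : ∀ i, Set.InjOn (f i) ↑B := by
    intro i x hx y hy hxy
    simp only [Finset.mem_coe] at hx hy
    by_cases hxF : x ∈ F <;> by_cases hyF : y ∈ F
    · rw [hfF i x hxF, hfF i y hyF] at hxy
      exact (g₀ i).injective hxy
    · have hy2 : y ∈ B \ F := Finset.mem_sdiff.mpr ⟨hy, hyF⟩
      rw [hfF i x hxF, hfBF i y hy2] at hxy
      have h1 : g₀ i x ∈ F.image (g₀ i) := Finset.mem_image_of_mem _ hxF
      have h2 := (e i ⟨y, hy2⟩).2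
      rw [← hxy] at h2
      exact absurd h1 (Finset.mem_sdiff.mp h2).2
    · have hx2 : x ∈ B \ F := Finset.mem_sdiff.mpr ⟨hx, hxF⟩
      rw [hfBF i x hx2, hfF i y hyF] at hxy
      have h1 : g₀ i y ∈ F.image (g₀ i) := Finset.mem_image_of_mem _ hyF
      have h2 := (e i ⟨x, hx2⟩).2
      rw [hxy] at h2
      exact absurd h1 (Finset.mem_sdiff.mp h2).2
    · have hx2 : x ∈ B \ F := Finset.mem_sdiff.mpr ⟨hx, hxF⟩
      have hy2 : y ∈ B \ F := Finset.mem_sdiff.mpr ⟨hy, hyF⟩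
      rw [hfBF i x hx2, hfBF i y hy2] at hxy
      have := (e i).injective (Subtype.coe_injective hxy)
      exact Subtype.mk_eq_mk.mp this
  choose g hg using fun i => exists_perm_extend (f i) B (hinj i)
  refine ⟨g, hF g ?_, B, hAB, ?_⟩
  · intro i x hx
    rw [hg i x (hFB hx), hfF i x hx]
  · intro i b hb
    rw [hg i b hb]
    by_cases hbF : b ∈ F
    · rw [hfF i b hbF]
      exact himB i (Finset.mem_image_of_mem _ hbF)
    · have hb2 : b ∈ B \ F := Finset.mem_sdiff.mpr ⟨hb, hbF⟩
      rw [hfBF i b hb2]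
      exact Finset.sdiff_subset (e i ⟨b, hb2⟩).2

lemma dense_U2 (A B : Finset ℕ) (h : Fin n → Equiv.Perm ℕ) : Dense (U2 n A B h) := by
  classical
  intro g₀
  rw [mem_closure_iff_nhds]
  intro V hV
  obtain ⟨F, hF⟩ := perm_nhds_basis g₀ hV
  have hg₀V : g₀ ∈ V := hF g₀ (fun _ _ _ => rfl)
  by_cases hsc : SideCond n A B h
  swap
  · exact ⟨g₀, hg₀V, fun hh => absurd hh.1 hsc⟩
  obtain ⟨hAB, hhB, hhfix⟩ := hsc
  by_cases hcase1 : ∀ i, ∀ a ∈ A, h i a ∈ A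
  swap
  · refine ⟨g₀, hg₀V, fun hh => ?_⟩
    push_neg at hcase1
    obtain ⟨i, a, ha, hina⟩ := hcase1
    obtain ⟨h1, h2⟩ := hh.2 i a ha
    exact absurd (h2 ▸ h1) hina
  by_cases hcase2 : ∀ i, ∀ a ∈ A ∩ F, h i a = g₀ i a
  swap
  · refine ⟨g₀, hg₀V, fun hh => ?_⟩
    push_neg at hcase2
    obtain ⟨i, a, ha, hne⟩ := hcase2
    exact absurd (hh.2 i a (Finset.mem_of_mem_inter_left ha)).2.symm hne
  by_cases hcase3 : ∀ i, ∀ x ∈ F, x ∉ A → g₀ i x ∉ A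
  swap
  · refine ⟨g₀, hg₀V, fun hh => ?_⟩
    push_neg at hcase3
    obtain ⟨i, x, hxF, hxA, hgA⟩ := hcase3
    have h1 : A.image (g₀ i) ⊆ A := by
      intro y hy
      obtain ⟨a, ha, rfl⟩ := Finset.mem_image.mp hy
      exact (hh.2 i a ha).1
    have h2 : A.image (g₀ i) = A :=
      Finset.eq_of_subset_of_card_le h1
        (le_of_eq (Finset.card_image_of_injective _ (g₀ i).injective).symm)
    rw [← h2] at hgA
    obtain ⟨a, ha, hax⟩ := Finset.mem_image.mp hgA
    exact absurd (((g₀ i).injective hax) ▸ ha) hxA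
  -- main construction
  set k := (B \ A).card with hk
  set E0 : Finset ℕ := A ∪ B ∪ F ∪ Finset.univ.biUnion (fun i => F.image (g₀ i)) with hE0
  set N := E0.sup id + 1 with hN
  set C := Finset.Ico N (N + k) with hC
  have hCcard : C.card = k := by simp [hC]
  have hCE0 : ∀ x ∈ C, x ∉ E0 := by
    intro x hx hxE
    have h1 : x ≤ E0.sup id := Finset.le_sup (f := id) hxE
    have h2 : N ≤ x := (Finset.mem_Ico.mp hx).1
    omega
  have hAE0 : A ⊆ E0 := by intro x hx; simp [hE0]; tauto
  have hBE0 : B ⊆ E0 := by intro x hx; simp [hE0]; tauto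
  have hFE0 : F ⊆ E0 := by intro x hx; simp [hE0]; tauto
  have himE0 : ∀ i : Fin n, F.image (g₀ i) ⊆ E0 := by
    intro i x hx
    simp only [hE0, Finset.mem_union, Finset.mem_biUnion]
    exact Or.inr ⟨i, Finset.mem_univ _, hx⟩
  have hCA : ∀ x ∈ C, x ∉ A := fun x hx hxA => hCE0 x hx (hAE0 hxA)
  have e : ↥C ≃ ↥(B \ A) := Fintype.equivOfCardEq (by simp [Fintype.card_coe, hCcard, hk])
  -- the permutation π
  set p : ℕ → ℕ := fun x => if x ∈ A then x else if hx : x ∈ C then ↑(e ⟨x, hx⟩) else x with hp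
  have hpA : ∀ a ∈ A, p a = a := by intro a ha; simp [hp, ha]
  have hpC : ∀ c, (hc : c ∈ C) → p c = ↑(e ⟨c, hc⟩) := by
    intro c hc
    rw [hp]
    simp only []
    rw [if_neg (hCA c hc), dif_pos hc]
  have hpinj : Set.InjOn p ↑(A ∪ C) := by
    intro x hx y hy hxy
    simp only [Finset.coe_union, Set.mem_union, Finset.mem_coe] at hx hy
    rcases hx with hx | hx <;> rcases hy with hy | hy
    · rwa [hpA x hx, hpA y hy] at hxy
    · rw [hpA x hx, hpC y hy] at hxy
      exact absurd (hxy ▸ hx) (Finset.mem_sdiff.mp (e ⟨y, hy⟩).2).2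
    · rw [hpC x hx, hpA y hy] at hxy
      exact absurd (hxy ▸ hy) (Finset.mem_sdiff.mp (e ⟨x, hx⟩).2).2
    · rw [hpC x hx, hpC y hy] at hxy
      exact Subtype.mk_eq_mk.mp (e.injective (Subtype.coe_injective hxy))
  obtain ⟨π, hπ⟩ := exists_perm_extend p (A ∪ C) hpinj
  have hπA : ∀ a ∈ A, π a = a := by
    intro a ha
    rw [hπ a (Finset.mem_union_left _ ha), hpA a ha]
  have hπC : ∀ c, (hc : c ∈ C) → π c = ↑(e ⟨c, hc⟩) := by
    intro c hc
    rw [hπ c (Finset.mem_union_right _ hc), hpC c hc]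
  have hπinvA : ∀ b ∈ A, π⁻¹ b = b := by
    intro b hb
    apply π.injective
    rw [show ∀ x, π (π⁻¹ x) = x from fun x => π.apply_symm_apply x, hπA b hb]
  have hπinvBA : ∀ b, (hb : b ∈ B \ A) → π⁻¹ b = ↑(e.symm ⟨b, hb⟩) := by
    intro b hb
    apply π.injective
    rw [show ∀ x, π (π⁻¹ x) = x from fun x => π.apply_symm_apply x, hπC _ (e.symm ⟨b, hb⟩).2]
    simp
  have hπinvB : ∀ b ∈ B, π⁻¹ b ∈ A ∪ C := by
    intro b hb
    by_cases hbA : b ∈ A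
    · rw [hπinvA b hbA]; exact Finset.mem_union_left _ hbA
    · rw [hπinvBA b (Finset.mem_sdiff.mpr ⟨hb, hbA⟩)]
      exact Finset.mem_union_right _ (e.symm ⟨b, _⟩).2
  have hπmapsB : ∀ x ∈ A ∪ C, π x ∈ B := by
    intro x hx
    rcases Finset.mem_union.mp hx with hx | hx
    · rw [hπA x hx]; exact hAB hx
    · rw [hπC x hx]
      exact (Finset.mem_sdiff.mp (e ⟨x, hx⟩).2).1
  -- the function f
  set f : Fin n → ℕ → ℕ := fun i x =>
    if x ∈ A ∪ C then π⁻¹ (h i (π x)) else if x ∈ F then g₀ i x else x with hf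
  have hfAC : ∀ i, ∀ x ∈ A ∪ C, f i x = π⁻¹ (h i (π x)) := by
    intro i x hx
    show (if x ∈ A ∪ C then π⁻¹ (h i (π x)) else if x ∈ F then g₀ i x else x) = _
    rw [if_pos hx]
  have hfF : ∀ i, ∀ x, x ∉ A ∪ C → x ∈ F → f i x = g₀ i x := by
    intro i x hx hxF
    show (if x ∈ A ∪ C then π⁻¹ (h i (π x)) else if x ∈ F then g₀ i x else x) = _
    rw [if_neg hx, if_pos hxF]
  have hmaps : ∀ i, ∀ x ∈ A ∪ C, f i x ∈ A ∪ C := by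
    intro i x hx
    rw [hfAC i x hx]
    exact hπinvB _ (hhB i _ (hπmapsB x hx))
  set D := (A ∪ C) ∪ F with hD
  have hfinj : ∀ i, Set.InjOn (f i) ↑D := by
    intro i x hx y hy hxy
    replace hx : x ∈ A ∪ C ∨ x ∈ F := Finset.mem_union.mp (Finset.mem_coe.mp hx)
    replace hy : y ∈ A ∪ C ∨ y ∈ F := Finset.mem_union.mp (Finset.mem_coe.mp hy)
    have hgF : ∀ z, z ∉ A ∪ C → z ∈ F → g₀ i z ∉ A ∪ C := by
      intro z hz hzF hmem
      rcases Finset.mem_union.mp hmem with hm | hm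
      · exact hcase3 i z hzF (fun hzA => hz (Finset.mem_union_left _ hzA)) hm
      · exact hCE0 _ hm (himE0 i (Finset.mem_image_of_mem _ hzF))
    by_cases hxAC : x ∈ A ∪ C <;> by_cases hyAC : y ∈ A ∪ C
    · rw [hfAC i x hxAC, hfAC i y hyAC] at hxy
      exact π.injective ((h i).injective (π⁻¹.injective hxy))
    · have hyF : y ∈ F := hy.resolve_left hyAC
      rw [hfAC i x hxAC, hfF i y hyAC hyF] at hxy
      exact absurd (hxy ▸ (hfAC i x hxAC ▸ hmaps i x hxAC)) (hgF y hyAC hyF)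
    · have hxF : x ∈ F := hx.resolve_left hxAC
      rw [hfF i x hxAC hxF, hfAC i y hyAC] at hxy
      exact absurd (hxy ▸ (hfAC i y hyAC ▸ hmaps i y hyAC)) (hgF x hxAC hxF)
    · have hxF : x ∈ F := hx.resolve_left hxAC
      have hyF : y ∈ F := hy.resolve_left hyAC
      rw [hfF i x hxAC hxF, hfF i y hyAC hyF] at hxy
      exact (g₀ i).injective hxy
  choose g hg using fun i => exists_perm_extend (f i) D (hfinj i)
  refine ⟨g, hF g ?_, fun _ => ?_⟩
  · -- g agrees with g₀ on F
    intro i x hxF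
    rw [hg i x (Finset.mem_union_right _ hxF)]
    by_cases hxAC : x ∈ A ∪ C
    · have hxA : x ∈ A := by
        rcases Finset.mem_union.mp hxAC with hm | hm
        · exact hm
        · exact absurd (hFE0 hxF) (hCE0 x hm)
      rw [hfAC i x hxAC, hπA x hxA, hcase2 i x (Finset.mem_inter.mpr ⟨hxA, hxF⟩),
        ← hcase2 i x (Finset.mem_inter.mpr ⟨hxA, hxF⟩)]
      rw [hπinvA _ (hcase1 i x hxA), hcase2 i x (Finset.mem_inter.mpr ⟨hxA, hxF⟩)]
    · exact hfF i x hxAC hxF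
  · -- g is in the conclusion set
    refine Set.mem_iUnion.mpr ⟨π, Set.mem_iUnion.mpr ⟨hπA, ?_⟩⟩
    intro i b hb
    have h1 : π⁻¹ b ∈ A ∪ C := hπinvB b hb
    rw [hg i _ (Finset.mem_union_left _ h1), hfAC i _ h1, show ∀ x, π (π⁻¹ x) = x from fun x => π.apply_symm_apply x]

def SB (n : ℕ) (B : Finset ℕ) : Set (Fin n → Equiv.Perm ℕ) :=
  {h | ∀ i, ∀ x ∉ B, h i x = x}


lemma countable_SB (n : ℕ) (B : Finset ℕ) : (SB n B).Countable := by
  classical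
  have : Countable ↥(SB n B) := by
    have hinj : Function.Injective
        (fun h : ↥(SB n B) => (fun i (b : ↥B) => (h : Fin n → Equiv.Perm ℕ) i ↑b)) := by
      rintro ⟨h1, hh1⟩ ⟨h2, hh2⟩ heq
      ext i x
      by_cases hx : x ∈ B
      · exact congrFun (congrFun heq i) ⟨x, hx⟩
      · rw [hh1 i x hx, hh2 i x hx]
    exact Function.Injective.countable hinj
  exact Set.countable_coe_iff.mp this

theorem stmt_8 (n : ℕ) (hn : 1 ≤ n) :
    {g : Fin n → Equiv.Perm ℕ | IsGenericTuple g} ∈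
      residual (Fin n → Equiv.Perm ℕ) := by
  classical
  have hmem : ((⋂ A : Finset ℕ, U1 n A) ∩
      ⋂ (A : Finset ℕ) (B : Finset ℕ), ⋂ h ∈ SB n B, U2 n A B h) ∈
      residual (Fin n → Equiv.Perm ℕ) := by
    refine Filter.inter_mem ?_ ?_
    · exact (countable_iInter_mem).mpr fun A =>
        residual_of_dense_open (isOpen_U1 A) (dense_U1 A)
    · refine (countable_iInter_mem).mpr fun A => (countable_iInter_mem).mpr fun B => ?_
      exact (countable_bInter_mem (countable_SB n B)).mpr fun h _ =>
        residual_of_dense_open (isOpen_U2 A B h) (dense_U2 A B h)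
  refine Filter.mem_of_superset hmem ?_
  rintro g ⟨hg1, hg2⟩
  simp only [Set.mem_iInter] at hg1 hg2
  constructor
  · intro A
    obtain ⟨B, hAB, hB⟩ := hg1 A
    refine ⟨B, hAB, fun i => ?_⟩
    apply Finset.eq_of_subset_of_card_le
    · intro y hy
      obtain ⟨b, hb, rfl⟩ := Finset.mem_image.mp hy
      exact hB i b hb
    · exact le_of_eq (Finset.card_image_of_injective _ (g i).injective).symm
  · intro A B hAB hAinv h hBinv hfix hagree
    have hhSB : h ∈ SB n B := hfix
    have hu2 := hg2 A B h hhSB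
    have hcon : g ∈ Conc n A B h := by
      apply hu2
      refine ⟨⟨hAB, fun i b hb => ?_, hfix⟩, fun i a ha => ⟨?_, (hagree i a ha).symm⟩⟩
      · rw [← hBinv i]; exact Finset.mem_image_of_mem _ hb
      · rw [← hAinv i]; exact Finset.mem_image_of_mem _ ha
    obtain ⟨π, hπ⟩ := Set.mem_iUnion.mp hcon
    obtain ⟨hπA, hπc⟩ := Set.mem_iUnion.mp hπ
    refine ⟨π, hπA, fun i b hb => ?_⟩
    have := hπc i b hb
    simp only [Equiv.Perm.mul_apply]
    rw [this, show ∀ x, π (π⁻¹ x) = x from fun x => π.apply_symm_apply x]
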